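/- arXiv:1701.04856 — 2 statements merged into one kernel-verified Lean document; each statement's English description precedes it below -/
import Mathlib

section
/- Let 𝔤, σ, τ, ω, ⟨·,·⟩ be as in the dihedral setup (σ^T = id, τ anti-linear involutive automorphism, ⟨·,·⟩ non-degenerate invariant, σ-invariant, and τ-conjugate-invariant). For k, p ∈ ℤ/T define the real subspace 𝔤_{k,p} = {x ∈ 𝔤 : σ^k τ x = ω^{kp} x}, the fixed set of the anti-linear involution ω^{−kp} σ^k ∘ τ. Then the restriction of ⟨·,·⟩ to 𝔤_{k,−p} × 𝔤_{k,p} is real-valued and non-degenerate on both sides. In particular, ⟨·,·⟩ restricts to a non-degenerate invariant symmetric real bilinear form on the real form 𝔤_k = 𝔤_{k,0}. -/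
/-- Lemma 2.1, second part: in the dihedral setup, for `k, p ∈ ℤ/T` let
`g_{k,p} = {x | σ^k τ x = ω^{kp} x}` be the fixed set of the anti-linear involution
`ω^{−kp} σ^k ∘ τ`.  Then the restriction of the form to `g_{k,−p} × g_{k,p}` is real-valued
and non-degenerate on both sides; in particular (`p = 0`) it restricts to a non-degenerate
invariant symmetric real bilinear form on the real form `g_k = g_{k,0}`. -/
theorem stmt_7 {g : Type*} [LieRing g] [LieAlgebra ℂ g] [FiniteDimensional ℂ g]
    (T : ℕ) (hT : 1 ≤ T) (ω : ℂ) (hω : IsPrimitiveRoot ω T)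
    (σ : g ≃ₗ⁅ℂ⁆ g) (hσT : ∀ x : g, (⇑σ)^[T] x = x)
    (τ : g → g)
    (hτadd : ∀ x y, τ (x + y) = τ x + τ y)
    (hτsmul : ∀ (z : ℂ) (x : g), τ (z • x) = (starRingEnd ℂ) z • τ x)
    (hτlie : ∀ x y : g, τ ⁅x, y⁆ = ⁅τ x, τ y⁆)
    (hτinv : ∀ x, τ (τ x) = x)
    (hτσ : ∀ (j : ℤ) (x : g), σ x = ω ^ j • x → σ (τ x) = ω ^ j • τ x)
    (B : g →ₗ[ℂ] g →ₗ[ℂ] ℂ)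
    (hBsymm : ∀ x y, B x y = B y x)
    (hBnd : ∀ x, (∀ y, B x y = 0) → x = 0)
    (hBinv : ∀ x y z : g, B ⁅x, y⁆ z = - B y ⁅x, z⁆)
    (hBσ : ∀ x y, B (σ x) (σ y) = B x y)
    (hBτ : ∀ x y, B (τ x) (τ y) = (starRingEnd ℂ) (B x y)) :
    ∀ (k : ℕ) (p : ℤ),
      (∀ x y : g,
        (⇑σ)^[k] (τ x) = ω ^ (-((k : ℤ) * p)) • x →
        (⇑σ)^[k] (τ y) = ω ^ ((k : ℤ) * p) • y →
        ∃ r : ℝ, B x y = (r : ℂ)) ∧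
      (∀ y : g, (⇑σ)^[k] (τ y) = ω ^ ((k : ℤ) * p) • y → y ≠ 0 →
        ∃ x : g, (⇑σ)^[k] (τ x) = ω ^ (-((k : ℤ) * p)) • x ∧ B x y ≠ 0) ∧
      (∀ x : g, (⇑σ)^[k] (τ x) = ω ^ (-((k : ℤ) * p)) • x → x ≠ 0 →
        ∃ y : g, (⇑σ)^[k] (τ y) = ω ^ ((k : ℤ) * p) • y ∧ B x y ≠ 0) := by
  intro k p
  have hT0 : T ≠ 0 := by omega
  have hω0 : ω ≠ 0 := hω.ne_zero hT0
  have hωT : ω ^ T = 1 := hω.pow_eq_one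
  have hnorm : ‖ω‖ = 1 := hω.norm'_eq_one hT0
  have hconj : (starRingEnd ℂ) ω = ω⁻¹ := (Complex.inv_eq_conj hnorm).symm
  have hconjz : ∀ n : ℤ, (starRingEnd ℂ) (ω ^ n) = ω ^ (-n) := by
    intro n; rw [map_zpow₀, hconj, inv_zpow, zpow_neg]
  have hconjn : ∀ n : ℕ, (starRingEnd ℂ) (ω ^ n) = (ω ^ n)⁻¹ := by
    intro n; rw [map_pow, hconj, inv_pow]
  have hperiod : ∀ a b c : ℤ, a = b + (T : ℤ) * c → ω ^ a = ω ^ b := by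
    intro a b c h
    rw [h, zpow_add₀ hω0, zpow_mul, zpow_natCast, hωT, one_zpow, mul_one]
  have h1add : ∀ a b : g, σ (a + b) = σ a + σ b := fun a b => σ.toLieHom.map_add a b
  have h1smul : ∀ (z : ℂ) (a : g), σ (z • a) = z • σ a := fun z a => σ.toLieHom.map_smul z a
  have h1zero : σ 0 = 0 := σ.toLieHom.map_zero
  have hσsum : ∀ (s : Finset ℕ) (f : ℕ → g), σ (∑ i ∈ s, f i) = ∑ i ∈ s, σ (f i) := by
    intro s f
    induction s using Finset.cons_induction with
    | empty => simpa using h1zero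
    | cons a s ha ih => rw [Finset.sum_cons, h1add, ih, Finset.sum_cons]
  -- basic facts about iterates of σ
  have hσadd : ∀ (m : ℕ) (a b : g), (⇑σ)^[m] (a + b) = (⇑σ)^[m] a + (⇑σ)^[m] b := by
    intro m
    induction m with
    | zero => intro a b; simp
    | succ m ih =>
      intro a b
      simp only [Function.iterate_succ_apply', ih, h1add]
  have hσsmul : ∀ (m : ℕ) (z : ℂ) (a : g), (⇑σ)^[m] (z • a) = z • (⇑σ)^[m] a := by
    intro m
    induction m with
    | zero => intro z a; simp
    | succ m ih =>
      intro z a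
      simp only [Function.iterate_succ_apply', ih, h1smul]
  have hσeigen : ∀ (m : ℕ) (c : ℂ) (v : g), σ v = c • v → (⇑σ)^[m] v = c ^ m • v := by
    intro m c
    induction m with
    | zero => intro v _; simp
    | succ m ih =>
      intro v hv
      rw [Function.iterate_succ_apply, hv, hσsmul, ih v hv, smul_smul, pow_succ]
      ring_nf
  -- eigenvectors of σ are permuted by τ
  have hστ : ∀ (j : ℕ) (v : g), σ v = ω ^ j • v → σ (τ v) = ω ^ j • τ v := by
    intro j v hv
    have := hτσ (j : ℤ) v (by rw [zpow_natCast]; exact hv)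
    rwa [zpow_natCast] at this
  -- the key involution identity on eigenvectors
  have heig : ∀ (j : ℕ) (v : g), σ v = ω ^ j • v →
      (⇑σ)^[k] (τ ((⇑σ)^[k] (τ v))) = v := by
    intro j v hv
    have h1 : (⇑σ)^[k] (τ v) = (ω ^ j) ^ k • τ v := hσeigen k _ (τ v) (hστ j v hv)
    rw [h1, hτsmul, hτinv, hσsmul, hσeigen k _ v hv, smul_smul, ← pow_mul, hconjn,
      inv_mul_cancel₀ (pow_ne_zero _ hω0), one_smul]
  -- bundle (σ^k ∘ τ)^2 as a linear map
  let L : g →ₗ[ℂ] g :=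
    { toFun := fun x => (⇑σ)^[k] (τ ((⇑σ)^[k] (τ x)))
      map_add' := by intro a b; simp only [hτadd, hσadd]
      map_smul' := by
        intro z a
        simp only [hτsmul, hσsmul, RingHom.id_apply, Complex.conj_conj] }
  have hL : ∀ x : g, L x = (⇑σ)^[k] (τ ((⇑σ)^[k] (τ x))) := fun _ => rfl
  -- the involution identity on all of g, via spectral projections
  have hinv2 : ∀ x : g, (⇑σ)^[k] (τ ((⇑σ)^[k] (τ x))) = x := by
    intro x
    obtain ⟨t, rfl⟩ : ∃ t, T = t + 1 := ⟨T - 1, by omega⟩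
    set u : ℕ → g :=
      fun j => ∑ m ∈ Finset.range (t + 1), ω ^ (-((j * m : ℕ) : ℤ)) • (⇑σ)^[m] x with hu
    have huj : ∀ j, u j = ∑ m ∈ Finset.range (t + 1), ω ^ (-((j * m : ℕ) : ℤ)) • (⇑σ)^[m] x :=
      fun _ => rfl
    have hσu : ∀ j : ℕ, σ (u j) = ω ^ j • u j := by
      intro j
      have hmap : σ (u j)
          = ∑ m ∈ Finset.range (t + 1), ω ^ (-((j * m : ℕ) : ℤ)) • (⇑σ)^[m + 1] x := by
        rw [huj j, hσsum]
        refine Finset.sum_congr rfl fun m _ => ?_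
        simp [h1smul, Function.iterate_succ_apply']
      rw [hmap, huj j, Finset.smul_sum]
      rw [Finset.sum_range_succ, Finset.sum_range_succ']
      congr 1
      · refine Finset.sum_congr rfl fun m _ => ?_
        rw [smul_smul]
        congr 1
        rw [← zpow_natCast ω j, ← zpow_add₀ hω0]
        congr 1
        push_cast
        ring
      · rw [hσT x]
        simp only [Function.iterate_zero, id_eq, Nat.mul_zero, Nat.cast_zero, neg_zero,
          zpow_zero, mul_one, one_smul]
        rw [← zpow_natCast ω j,
          hperiod (-((j * t : ℕ) : ℤ)) (j : ℤ) (-(j : ℤ)) (by push_cast; ring)]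
    have hsum : ∑ j ∈ Finset.range (t + 1), u j = ((t + 1 : ℕ) : ℂ) • x := by
      simp only [huj]
      rw [Finset.sum_comm]
      have hterm : ∀ m ∈ Finset.range (t + 1),
          (∑ j ∈ Finset.range (t + 1), ω ^ (-((j * m : ℕ) : ℤ)) • (⇑σ)^[m] x)
            = if m = 0 then ((t + 1 : ℕ) : ℂ) • x else 0 := by
        intro m hm
        rcases Nat.eq_zero_or_pos m with h0 | h0
        · subst h0
          rw [if_pos rfl]
          have : ∀ j ∈ Finset.range (t + 1),
              ω ^ (-((j * 0 : ℕ) : ℤ)) • (⇑σ)^[0] x = x := by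
            intro j _
            simp
          rw [Finset.sum_congr rfl this, Finset.sum_const, Finset.card_range,
            ← Nat.cast_smul_eq_nsmul ℂ (t + 1) x]
        · rw [if_neg (by omega)]
          have hζ : ∀ j : ℕ, ω ^ (-((j * m : ℕ) : ℤ)) = (ω ^ (-(m : ℤ))) ^ j := by
            intro j
            rw [← zpow_natCast (ω ^ (-(m : ℤ))) j, ← zpow_mul]
            congr 1
            push_cast
            ring
          have hne : ω ^ (-(m : ℤ)) ≠ 1 := by
            intro hcon
            rw [zpow_neg, inv_eq_one, zpow_natCast] at hcon
            exact hω.pow_ne_one_of_pos_of_lt h0.ne' (Finset.mem_range.mp hm) hcon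
          have hgeo : ∑ j ∈ Finset.range (t + 1), (ω ^ (-(m : ℤ))) ^ j = 0 := by
            rw [geom_sum_eq hne]
            have hpow : (ω ^ (-(m : ℤ))) ^ (t + 1) = 1 := by
              rw [← zpow_natCast (ω ^ (-(m : ℤ))) (t + 1), ← zpow_mul]
              exact hperiod _ 0 (-(m : ℤ)) (by push_cast; ring)
            rw [hpow, sub_self, zero_div]
          calc ∑ j ∈ Finset.range (t + 1), ω ^ (-((j * m : ℕ) : ℤ)) • (⇑σ)^[m] x
              = (∑ j ∈ Finset.range (t + 1), (ω ^ (-(m : ℤ))) ^ j) • (⇑σ)^[m] x := by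
                rw [Finset.sum_smul]
                exact Finset.sum_congr rfl fun j _ => by rw [hζ j]
            _ = 0 := by rw [hgeo, zero_smul]
      rw [Finset.sum_congr rfl hterm,
        Finset.sum_ite_eq' (Finset.range (t + 1)) 0 (fun _ => ((t + 1 : ℕ) : ℂ) • x)]
      simp
    have hTne : ((t + 1 : ℕ) : ℂ) ≠ 0 := by
      rw [Ne, Nat.cast_eq_zero]
      omega
    have hx : x = ((t + 1 : ℕ) : ℂ)⁻¹ • ∑ j ∈ Finset.range (t + 1), u j := by
      rw [hsum, smul_smul, inv_mul_cancel₀ hTne, one_smul]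
    have hLx : L x = x := by
      conv_lhs => rw [hx]
      rw [map_smul, map_sum]
      have : ∀ j ∈ Finset.range (t + 1), L (u j) = u j := fun j _ => heig j (u j) (hσu j)
      rw [Finset.sum_congr rfl this, ← hx]
    rw [← hL]
    exact hLx
  -- B is invariant under σ^[m]
  have hBσk : ∀ (m : ℕ) (a b : g), B ((⇑σ)^[m] a) ((⇑σ)^[m] b) = B a b := by
    intro m
    induction m with
    | zero => intro a b; simp
    | succ m ih =>
      intro a b
      rw [Function.iterate_succ_apply', Function.iterate_succ_apply', hBσ]
      exact ih a b
  -- part 1 : real-valuedness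
  have hreal : ∀ x y : g,
      (⇑σ)^[k] (τ x) = ω ^ (-((k : ℤ) * p)) • x →
      (⇑σ)^[k] (τ y) = ω ^ ((k : ℤ) * p) • y →
      ∃ r : ℝ, B x y = (r : ℂ) := by
    intro x y hx hy
    have : (starRingEnd ℂ) (B x y) = B x y := by
      calc (starRingEnd ℂ) (B x y) = B (τ x) (τ y) := (hBτ x y).symm
        _ = B ((⇑σ)^[k] (τ x)) ((⇑σ)^[k] (τ y)) := (hBσk k _ _).symm
        _ = (ω ^ (-((k : ℤ) * p)) * ω ^ ((k : ℤ) * p)) * B x y := by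
            rw [hx, hy]
            simp only [map_smul, LinearMap.smul_apply, smul_eq_mul]
            ring
        _ = B x y := by
            rw [← zpow_add₀ hω0]
            simp
    exact Complex.conj_eq_iff_real.mp this
  -- core nondegeneracy lemma
  have core : ∀ (q : ℤ) (y : g), (⇑σ)^[k] (τ y) = ω ^ q • y → y ≠ 0 →
      ∃ x : g, (⇑σ)^[k] (τ x) = ω ^ (-q) • x ∧ B x y ≠ 0 := by
    intro q y hy hy0
    have hx0 : ∃ x0 : g, B x0 y ≠ 0 := by
      by_contra h
      push_neg at h
      exact hy0 (hBnd y fun z => (hBsymm y z).trans (h z))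
    obtain ⟨x0, hbx0⟩ := hx0
    obtain ⟨x1, hx1⟩ : ∃ x1 : g, x1 = (starRingEnd ℂ) (B x0 y) • x0 := ⟨_, rfl⟩
    refine ⟨x1 + ω ^ q • (⇑σ)^[k] (τ x1), ?_, ?_⟩
    · rw [hτadd x1 (ω ^ q • (⇑σ)^[k] (τ x1)),
        hτsmul (ω ^ q) ((⇑σ)^[k] (τ x1)),
        hσadd k (τ x1) _,
        hσsmul k ((starRingEnd ℂ) (ω ^ q)) (τ ((⇑σ)^[k] (τ x1))),
        hinv2 x1, hconjz q, smul_add, smul_smul, ← zpow_add₀ hω0, neg_add_cancel,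
        zpow_zero, one_smul]
      abel
    · have hw : B ((⇑σ)^[k] (τ x1)) y = ω ^ (-q) * (starRingEnd ℂ) (B x1 y) := by
        conv_lhs => rw [show y = ω ^ (-q) • (⇑σ)^[k] (τ y) by
          rw [hy, smul_smul, ← zpow_add₀ hω0, neg_add_cancel, zpow_zero, one_smul]]
        rw [map_smul, smul_eq_mul, hBσk, hBτ]
      have hgoal : B (x1 + ω ^ q • (⇑σ)^[k] (τ x1)) y
          = B x1 y + ω ^ q * B ((⇑σ)^[k] (τ x1)) y := by
        rw [map_add, LinearMap.add_apply, map_smul, LinearMap.smul_apply, smul_eq_mul]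
      rw [hgoal, hw]
      have h1 : ω ^ q * (ω ^ (-q) * (starRingEnd ℂ) (B x1 y))
          = (starRingEnd ℂ) (B x1 y) := by
        rw [← mul_assoc, ← zpow_add₀ hω0, add_neg_cancel, zpow_zero, one_mul]
      rw [h1]
      have hx1y : B x1 y = (starRingEnd ℂ) (B x0 y) * B x0 y := by
        rw [hx1, map_smul, LinearMap.smul_apply, smul_eq_mul]
      have h2 : B x1 y + (starRingEnd ℂ) (B x1 y)
          = 2 * ((Complex.normSq (B x0 y) : ℝ) : ℂ) := by
        rw [hx1y, map_mul, Complex.conj_conj, mul_comm ((starRingEnd ℂ) (B x0 y)),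
          Complex.mul_conj]
        ring
      rw [h2]
      have hnz : Complex.normSq (B x0 y) ≠ 0 := fun hcon =>
        hbx0 (Complex.normSq_eq_zero.mp hcon)
      simp [hnz]
  refine ⟨hreal, ?_, ?_⟩
  · intro y hy hy0
    exact core ((k : ℤ) * p) y hy hy0
  · intro x hx hx0
    obtain ⟨y, hy1, hy2⟩ := core (-((k : ℤ) * p)) x hx hx0
    rw [neg_neg] at hy1
    exact ⟨y, hy1, by rw [hBsymm]; exact hy2⟩
end

section
/- Let 𝔥 be a finite-dimensional complex vector space with a symmetric non-degenerate bilinear form ⟨·,·⟩, dual bases {H_i} and {H^i} of 𝔥 (⟨H^i, H_j⟩ = δ^i_j), and functionals α_0,…,α_ℓ ∈ 𝔥*. Consider the Heisenberg-type Lie algebra ℋ with basis {H^{i(+)}_n, H^{i(−)}_n : 1 ≤ i ≤ ℓ, n ∈ ℤ} ∪ {E^{j(+)}_n : 0 ≤ j ≤ ℓ, n ∈ ℤ} ∪ {𝟙}, with non-trivial brackets [H^{i(+)}_m, H^{j(−)}_n] = δ_{m+n,0} ⟨H^i, H^j⟩ 𝟙 and [H^{i(+)}_m, E^{j(+)}_n]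 = α_j(H^i) E^{j(+)}_{m+n}, and 𝟙 central. In the Poisson algebra S(ℋ) (suitably completed), the elements Ê^{j(+)}_n := Σ_{p∈ℤ} p E^{j(+)}_{n−p} H^{(−)}_{j,p} − n E^{j(+)}_n (for all n ∈ ℤ, 0 ≤ j ≤ ℓ, where H^{(−)}_{j,p} = Σ_k α_j(H_k) H^{k(−)}_p) together with 𝟙 − 1 generate a Poisson ideal. Concretely: {H^{i(+)}_m, Ê^{j(+)}_n} = α_j(H^i) Ê^{j(+)}_{m+n} − α_j(H^i) m E^{j(+)}_{m+n}(𝟙 − 1), and Ê^{j(+)}_n Poisson-commutes with all H^{i(−)}_m and E^{i(+)}_m. -/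
/-- The consistency of the exponential Toda relations (Lemma `lem: Toda exp`): in the
(completed) Poisson algebra generated by the Heisenberg-type Lie algebra `ℋ` with basis
`H^{i(±)}_n` (`1 ≤ i ≤ ℓ`, `n ∈ ℤ`), `E^{j(+)}_n` (`0 ≤ j ≤ ℓ`, `n ∈ ℤ`) and central `𝟙`,
with non-trivial brackets
`{H^{i(+)}_m, H^{i'(−)}_n} = δ_{m+n,0} ⟨H^i, H^{i'}⟩ 𝟙` and
`{H^{i(+)}_m, E^{j(+)}_n} = α_j(H^i) E^{j(+)}_{m+n}`,
the elements `Ê^{j(+)}_n = Σ_{p∈ℤ} p E^{j(+)}_{n−p} H^{(−)}_{j,p} − n E^{j(+)}_n`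
(where `H^{(−)}_{j,p} = Σ_k α_j(H_k) H^{k(−)}_p`) together with `𝟙 − 1` generate a Poisson
ideal; concretely:
`{H^{i(+)}_m, Ê^{j(+)}_n} = α_j(H^i) Ê^{j(+)}_{m+n} − α_j(H^i) m E^{j(+)}_{m+n}(𝟙 − 1)`,
each `Ê^{j(+)}_n` Poisson-commutes with all the `H^{i(−)}_m` and `E^{i'(+)}_m`, and `𝟙 − 1`
is Poisson-central.  The completed infinite sums are encoded via `tsum` in a Hausdorff
topological ring, with the bracket commuting with summation. -/
theorem stmt_18 {H : Type*} [AddCommGroup H] [Module ℂ H]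
    {ι ιE : Type*} [Fintype ι]
    (B : H →ₗ[ℂ] H →ₗ[ℂ] ℂ) (hBsymm : ∀ x y, B x y = B y x)
    (hBnd : ∀ x, (∀ y, B x y = 0) → x = 0)
    (bH : Module.Basis ι ℂ H) (Hup : ι → H) [DecidableEq ι]
    (hdual : ∀ a b : ι, B (Hup a) (bH b) = if a = b then 1 else 0)
    (α : ιE → (H →ₗ[ℂ] ℂ))
    {P : Type*} [CommRing P] [Algebra ℂ P]
    [TopologicalSpace P] [T2Space P] [IsTopologicalRing P] [ContinuousConstSMul ℂ P]
    (br : P →ₗ[ℂ] P →ₗ[ℂ] P)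
    (hskew : ∀ x y : P, br x y = - br y x)
    (hleib : ∀ x y z : P, br x (y * z) = br x y * z + y * br x z)
    (HP HM : ι → ℤ → P) (E : ιE → ℤ → P) (one : P)
    (hPP : ∀ (i i' : ι) (m n : ℤ), br (HP i m) (HP i' n) = 0)
    (hMM : ∀ (i i' : ι) (m n : ℤ), br (HM i m) (HM i' n) = 0)
    (hPM : ∀ (i i' : ι) (m n : ℤ), br (HP i m) (HM i' n) =
      if m + n = 0 then B (Hup i) (Hup i') • one else 0)
    (hPE : ∀ (i : ι) (j : ιE) (m n : ℤ), br (HP i m) (E j n) = α j (Hup i) • E j (m + n))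
    (hME : ∀ (i : ι) (j : ιE) (m n : ℤ), br (HM i m) (E j n) = 0)
    (hEE : ∀ (j j' : ιE) (m n : ℤ), br (E j m) (E j' n) = 0)
    (hone : ∀ x : P, br x one = 0)
    (HMbar : ιE → ℤ → P)
    (hHMbar : ∀ (j : ιE) (p : ℤ), HMbar j p = ∑ k : ι, α j (bH k) • HM k p)
    (hsummable : ∀ (j : ιE) (n : ℤ),
      Summable (fun p : ℤ => ((p : ℂ) • (E j (n - p) * HMbar j p) : P)))
    (hbrsum : ∀ (x : P) (f : ℤ → P), Summable f →
      Summable (fun p => br x (f p)) ∧ br x (∑' p : ℤ, f p) = ∑' p : ℤ, br x (f p))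
    (Ehat : ιE → ℤ → P)
    (hEhat : ∀ (j : ιE) (n : ℤ), Ehat j n =
      (∑' p : ℤ, (p : ℂ) • (E j (n - p) * HMbar j p)) - (n : ℂ) • E j n) :
    (∀ (i : ι) (j : ιE) (m n : ℤ), br (HP i m) (Ehat j n) =
      α j (Hup i) • Ehat j (m + n) -
        α j (Hup i) • ((m : ℂ) • (E j (m + n) * (one - 1)))) ∧
    (∀ (i : ι) (j : ιE) (m n : ℤ), br (HM i m) (Ehat j n) = 0) ∧
    (∀ (j' j : ιE) (m n : ℤ), br (E j' m) (Ehat j n) = 0) ∧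
    (∀ x : P, br x (one - 1) = 0) := by
  have hbr1 : ∀ x : P, br x 1 = 0 := by
    intro x
    have h := hleib x 1 1
    simp only [one_mul, mul_one] at h
    exact (left_eq_add.mp h)
  have hcentral : ∀ x : P, br x (one - 1) = 0 := by
    intro x
    rw [map_sub, hone, hbr1, sub_zero]
  have hrepr : ∀ (x : H) (k : ι), B (Hup k) x = bH.repr x k := by
    intro x k
    conv_lhs => rw [← bH.sum_repr x]
    rw [map_sum]
    simp [hdual, Finset.sum_ite_eq]
  have halpha : ∀ (j : ιE) (i : ι),
      ∑ k : ι, α j (bH k) * B (Hup i) (Hup k) = α j (Hup i) := by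
    intro j i
    have hc : ∀ k, B (Hup i) (Hup k) = bH.repr (Hup i) k := fun k => by
      rw [hBsymm, hrepr]
    simp_rw [hc]
    conv_rhs => rw [← bH.sum_repr (Hup i)]
    rw [map_sum]
    simp [mul_comm]
  have hPMbar : ∀ (i : ι) (j : ιE) (m p : ℤ), br (HP i m) (HMbar j p) =
      if m + p = 0 then α j (Hup i) • one else 0 := by
    intro i j m p
    rw [hHMbar, map_sum]
    simp only [map_smul, hPM]
    by_cases h : m + p = 0
    · simp only [h, if_true, smul_smul]
      rw [← Finset.sum_smul, halpha]
    · simp [h]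
  refine ⟨?_, ?_, ?_, hcentral⟩
  · intro i j m n
    set a := α j (Hup i) with ha
    set f : ℤ → P := fun p => (p : ℂ) • (E j (n - p) * HMbar j p) with hf
    have hg : Summable (fun p : ℤ => a • ((p : ℂ) • (E j (m + n - p) * HMbar j p))) :=
      (hsummable j (m + n)).const_smul a
    have hh : Summable (fun p : ℤ =>
        if p = -m then (-(m : ℂ)) • (a • (E j (m + n) * one)) else 0) := by
      apply summable_of_ne_finset_zero (s := ({-m} : Finset ℤ))
      intro p hp
      simp only [Finset.mem_singleton] at hp
      simp [hp]
    have hterm : ∀ p : ℤ, br (HP i m) (f p) =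
        a • ((p : ℂ) • (E j (m + n - p) * HMbar j p)) +
        (if p = -m then (-(m : ℂ)) • (a • (E j (m + n) * one)) else 0) := by
      intro p
      have hidx : m + (n - p) = m + n - p := by ring
      rw [hf]
      simp only [map_smul, hleib, hPE, hPMbar, hidx, ← ha]
      by_cases hp : p = -m
      · have hc : m + p = 0 := by omega
        rw [if_pos hc, if_pos hp]
        subst hp
        have h2 : n - (-m) = m + n := by ring
        rw [h2]
        simp only [Algebra.smul_def]
        push_cast [map_neg, map_add]
        ring
      · have hc : ¬ (m + p = 0) := by omega
        rw [if_neg hc, if_neg hp]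
        simp only [Algebra.smul_def]
        ring
    have hsum1 := hbrsum (HP i m) f (hsummable j n)
    have h2 : (∑' p : ℤ, br (HP i m) (f p)) =
        (∑' p : ℤ, a • ((p : ℂ) • (E j (m + n - p) * HMbar j p))) +
        (∑' p : ℤ, if p = -m then (-(m : ℂ)) • (a • (E j (m + n) * one)) else 0) := by
      rw [← Summable.tsum_add hg hh]
      exact tsum_congr hterm
    have h3 : (∑' p : ℤ, a • ((p : ℂ) • (E j (m + n - p) * HMbar j p))) =
        a • ∑' p : ℤ, (p : ℂ) • (E j (m + n - p) * HMbar j p) :=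
      Summable.tsum_const_smul a (hsummable j (m + n))
    have h4 : (∑' p : ℤ, if p = -m then (-(m : ℂ)) • (a • (E j (m + n) * one)) else 0) =
        (-(m : ℂ)) • (a • (E j (m + n) * one)) := tsum_ite_eq (-m) _
    rw [hEhat j n, map_sub, map_smul, hPE, ← hf, hsum1.2, h2, h3, h4,
      hEhat j (m + n), ← ha]
    simp only [Algebra.smul_def]
    push_cast [map_neg, map_add]
    ring
  · intro i j m n
    rw [hEhat, map_sub, map_smul, hME, smul_zero, sub_zero,
      (hbrsum (HM i m) _ (hsummable j n)).2]
    have hz : ∀ p : ℤ, br (HM i m) ((p : ℂ) • (E j (n - p) * HMbar j p)) = 0 := by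
      intro p
      rw [map_smul, hleib, hME, hHMbar, map_sum]
      simp [hMM]
    rw [tsum_congr hz, tsum_zero]
  · intro j' j m n
    have hEM : ∀ (k : ι) (p : ℤ), br (E j' m) (HM k p) = 0 := by
      intro k p
      rw [hskew, hME, neg_zero]
    rw [hEhat, map_sub, map_smul, hEE, smul_zero, sub_zero,
      (hbrsum (E j' m) _ (hsummable j n)).2]
    have hz : ∀ p : ℤ, br (E j' m) ((p : ℂ) • (E j (n - p) * HMbar j p)) = 0 := by
      intro p
      rw [map_smul, hleib, hEE, hHMbar, map_sum]
      simp [hEM]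
    rw [tsum_congr hz, tsum_zero]
end
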